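/- Let C = {(x:y:z) ∈ ℙ²(ℂ) : x²·z = x·y²}. A matrix M ∈ SL(3,ℂ) satisfies M·C = C (as a subset of ℙ²(ℂ)) if and only if there exist a, c ∈ ℂ with a ≠ 0, c ≠ 0, c³ = 1 and b ∈ ℂ such that M is the lower-triangular matrix with rows (a, 0, 0), (b, c, 0), (b²/a, 2bc/a, 1/(ac)). -/

import Mathlib

open Matrix Polynomial

noncomputable section

/-- The special linear group `SL(3, ℂ)`. -/
abbrev SL3 := Matrix.SpecialLinearGroup (Fin 3) ℂ

/-- The complex projective plane `ℙ²(ℂ)`. -/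
abbrev P2 := Projectivization ℂ (Fin 3 → ℂ)

/-- The action of `SL(3, ℂ)` on `ℙ²(ℂ)` induced by the linear action on `ℂ³`. -/
noncomputable def act (g : SL3) (p : P2) : P2 :=
  Projectivization.map (Matrix.SpecialLinearGroup.toLin' g).toLinearMap
    (Matrix.SpecialLinearGroup.toLin' g).injective p
/-- The union of a smooth conic and a tangent line, `{x²·z = x·y²}`. -/
def Ctan : Set P2 := {p : P2 | p.rep 0 ^ 2 * p.rep 2 = p.rep 0 * p.rep 1 ^ 2}

/-! ### Auxiliary lemmas -/

lemma mulVec3 (N : Matrix (Fin 3) (Fin 3) ℂ) (u : Fin 3 → ℂ) (i : Fin 3) :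
    N.mulVec u i = N i 0 * u 0 + N i 1 * u 1 + N i 2 * u 2 := by
  simp [Matrix.mulVec, dotProduct, Fin.sum_univ_three]

lemma coe_mul_coe_inv (g : SL3) :
    (↑g : Matrix (Fin 3) (Fin 3) ℂ) * (↑(g⁻¹) : Matrix (Fin 3) (Fin 3) ℂ) = 1 := by
  rw [← Matrix.SpecialLinearGroup.coe_mul, mul_inv_cancel,
    Matrix.SpecialLinearGroup.coe_one]

lemma coe_inv_mul_coe (g : SL3) :
    (↑(g⁻¹) : Matrix (Fin 3) (Fin 3) ℂ) * (↑g : Matrix (Fin 3) (Fin 3) ℂ) = 1 := by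
  rw [← Matrix.SpecialLinearGroup.coe_mul, inv_mul_cancel,
    Matrix.SpecialLinearGroup.coe_one]

lemma mulVec_ne_zero (g : SL3) {v : Fin 3 → ℂ} (hv : v ≠ 0) :
    (↑g : Matrix (Fin 3) (Fin 3) ℂ).mulVec v ≠ 0 := by
  intro h
  apply hv
  have h2 : ((↑(g⁻¹) : Matrix (Fin 3) (Fin 3) ℂ) * (↑g : Matrix (Fin 3) (Fin 3) ℂ)).mulVec v = 0 := by
    rw [← Matrix.mulVec_mulVec, h, Matrix.mulVec_zero]
  rwa [coe_inv_mul_coe, Matrix.one_mulVec] at h2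

lemma act_mk (g : SL3) (v : Fin 3 → ℂ) (hv : v ≠ 0) :
    act g (Projectivization.mk ℂ v hv) =
      Projectivization.mk ℂ ((↑g : Matrix (Fin 3) (Fin 3) ℂ).mulVec v)
        (mulVec_ne_zero g hv) :=
  Projectivization.map_mk _ _ v hv

lemma act_cancel (g : SL3) (p : P2) : act g (act g⁻¹ p) = p := by
  induction p using Projectivization.ind with
  | h v hv =>
    rw [act_mk, act_mk]
    apply (Projectivization.mk_eq_mk_iff' ℂ _ _ _ _).mpr
    refine ⟨1, ?_⟩
    rw [one_smul, Matrix.mulVec_mulVec, coe_mul_coe_inv, Matrix.one_mulVec]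

lemma mem_Ctan_mk (v : Fin 3 → ℂ) (hv : v ≠ 0) :
    Projectivization.mk ℂ v hv ∈ Ctan ↔ v 0 ^ 2 * v 2 = v 0 * v 1 ^ 2 := by
  obtain ⟨t, ht⟩ :=
    (Projectivization.mk_eq_mk_iff ℂ _ _
      (Projectivization.mk ℂ v hv).rep_nonzero hv).mp
      (Projectivization.mk_rep (Projectivization.mk ℂ v hv))
  have h0 : (Projectivization.mk ℂ v hv).rep 0 = (t : ℂ) * v 0 := by
    rw [← ht]; simp [Units.smul_def]
  have h1 : (Projectivization.mk ℂ v hv).rep 1 = (t : ℂ) * v 1 := by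
    rw [← ht]; simp [Units.smul_def]
  have h2 : (Projectivization.mk ℂ v hv).rep 2 = (t : ℂ) * v 2 := by
    rw [← ht]; simp [Units.smul_def]
  have htne : (t : ℂ) ≠ 0 := t.ne_zero
  constructor
  · intro h
    have h' : ((t:ℂ) * v 0) ^ 2 * ((t:ℂ) * v 2) = ((t:ℂ) * v 0) * ((t:ℂ) * v 1) ^ 2 := by
      rw [← h0, ← h1, ← h2]; exact h
    have h3 := mul_left_cancel₀ (pow_ne_zero 3 htne) (a := (t:ℂ)^3)
      (b := v 0 ^ 2 * v 2) (c := v 0 * v 1 ^ 2) (by linear_combination h')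
    exact h3
  · intro h
    show _ ∈ {p : P2 | p.rep 0 ^ 2 * p.rep 2 = p.rep 0 * p.rep 1 ^ 2}
    simp only [Set.mem_setOf_eq, h0, h1, h2]
    linear_combination (t:ℂ)^3 * h

lemma poly_cases (p q : ℂ[X]) (h : ∀ t : ℂ, p.eval t * q.eval t = 0) :
    p = 0 ∨ q = 0 :=
  mul_eq_zero.mp (Polynomial.funext fun r => by simp [h r])

lemma coeffs2 {a0 a1 a2 : ℂ} (h : C a0 + C a1 * X + C a2 * X ^ 2 = (0 : ℂ[X])) :
    a0 = 0 ∧ a1 = 0 ∧ a2 = 0 := by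
  refine ⟨?_, ?_, ?_⟩
  · simpa using congrArg (fun p => Polynomial.coeff p 0) h
  · simpa using congrArg (fun p => Polynomial.coeff p 1) h
  · simpa using congrArg (fun p => Polynomial.coeff p 2) h

lemma coeffs4 {a0 a1 a2 a3 a4 : ℂ}
    (h : C a0 + C a1 * X + C a2 * X ^ 2 + C a3 * X ^ 3 + C a4 * X ^ 4 = (0 : ℂ[X])) :
    a0 = 0 ∧ a1 = 0 ∧ a2 = 0 ∧ a3 = 0 ∧ a4 = 0 := by
  refine ⟨?_, ?_, ?_, ?_, ?_⟩
  · simpa using congrArg (fun p => Polynomial.coeff p 0) h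
  · simpa using congrArg (fun p => Polynomial.coeff p 1) h
  · simpa using congrArg (fun p => Polynomial.coeff p 2) h
  · simpa using congrArg (fun p => Polynomial.coeff p 3) h
  · simpa using congrArg (fun p => Polynomial.coeff p 4) h

/-- An element `M ∈ SL(3,ℂ)` stabilizes the conic-plus-tangent-line cubic
`{x²·z = x·y²}` if and only if it is lower triangular with rows
`(a,0,0)`, `(b,c,0)`, `(b²/a, 2bc/a, 1/(ac))` for some `a ≠ 0`, `b`, and a cube
root of unity `c`. -/
theorem conic_tangent_line_full_stabilizer (M : SL3) :
    act M '' Ctan = Ctan ↔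
      ∃ a c b : ℂ, a ≠ 0 ∧ c ≠ 0 ∧ c ^ 3 = 1 ∧
        (M : Matrix (Fin 3) (Fin 3) ℂ) =
          !![a, 0, 0; b, c, 0; b ^ 2 / a, 2 * b * c / a, 1 / (a * c)] := by
  constructor
  · -- Forward direction
    intro h
    set A : Matrix (Fin 3) (Fin 3) ℂ := (↑M : Matrix (Fin 3) (Fin 3) ℂ) with hA
    have H : ∀ (v : Fin 3 → ℂ) (hv : v ≠ 0), v 0 ^ 2 * v 2 = v 0 * v 1 ^ 2 →
        (A.mulVec v) 0 ^ 2 * (A.mulVec v) 2 = (A.mulVec v) 0 * (A.mulVec v) 1 ^ 2 := by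
      intro v hv hF
      have hm : Projectivization.mk ℂ v hv ∈ Ctan := (mem_Ctan_mk v hv).mpr hF
      have h2 : act M (Projectivization.mk ℂ v hv) ∈ Ctan := by
        rw [← h]; exact Set.mem_image_of_mem _ hm
      rw [act_mk] at h2
      exact (mem_Ctan_mk _ _).mp h2
    -- conic condition
    have hconic := poly_cases
      (C (A 0 0) + C (A 0 1) * X + C (A 0 2) * X ^ 2)
      (C (A 0 0 * A 2 0 - A 1 0 ^ 2) + C (A 0 0 * A 2 1 + A 0 1 * A 2 0 - 2 * (A 1 0 * A 1 1)) * X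
        + C (A 0 0 * A 2 2 + A 0 1 * A 2 1 + A 0 2 * A 2 0 - A 1 1 ^ 2 - 2 * (A 1 0 * A 1 2)) * X ^ 2
        + C (A 0 1 * A 2 2 + A 0 2 * A 2 1 - 2 * (A 1 1 * A 1 2)) * X ^ 3
        + C (A 0 2 * A 2 2 - A 1 2 ^ 2) * X ^ 4)
      (by
        intro t
        have hne : (![1, t, t ^ 2] : Fin 3 → ℂ) ≠ 0 := by
          intro hz
          have := congrFun hz 0
          simp at this
        have hF : (![1, t, t ^ 2] : Fin 3 → ℂ) 0 ^ 2 * ![1, t, t ^ 2] 2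
            = ![1, t, t ^ 2] 0 * ![1, t, t ^ 2] 1 ^ 2 := by
          simp
        have hh := H ![1, t, t ^ 2] hne hF
        simp only [mulVec3] at hh
        simp only [Matrix.cons_val_zero, Matrix.cons_val_one, Matrix.head_cons,
          Matrix.cons_val_two, Matrix.tail_cons] at hh
        simp only [eval_add, eval_mul, eval_pow, eval_C, eval_X]
        linear_combination hh)
    rcases hconic with hpC | hqC
    · exfalso
      obtain ⟨h00, h01, h02⟩ := coeffs2 hpC
      have hdet := M.2
      rw [Matrix.det_fin_three] at hdet
      rw [← hA] at hdet
      rw [h00, h01, h02] at hdet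
      norm_num at hdet
    obtain ⟨hq0, hq1, hq2, hq3, hq4⟩ := coeffs4 hqC
    -- line condition
    have hline := poly_cases
      (C (A 0 2) + C (A 0 1) * X + C 0 * X ^ 2)
      (C (A 0 2 * A 2 2 - A 1 2 ^ 2) + C (A 0 1 * A 2 2 + A 0 2 * A 2 1 - 2 * (A 1 1 * A 1 2)) * X
        + C (A 0 1 * A 2 1 - A 1 1 ^ 2) * X ^ 2)
      (by
        intro y
        have hne : (![0, y, 1] : Fin 3 → ℂ) ≠ 0 := by
          intro hz
          have := congrFun hz 2
          simp at this
        have hF : (![0, y, 1] : Fin 3 → ℂ) 0 ^ 2 * ![0, y, 1] 2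
            = ![0, y, 1] 0 * ![0, y, 1] 1 ^ 2 := by simp
        have hh := H ![0, y, 1] hne hF
        simp only [mulVec3] at hh
        simp only [Matrix.cons_val_zero, Matrix.cons_val_one, Matrix.head_cons,
          Matrix.cons_val_two, Matrix.tail_cons] at hh
        simp only [eval_add, eval_mul, eval_pow, eval_C, eval_X]
        linear_combination hh)
    rcases hline with hpL | hqL
    swap
    · -- the quadratic form vanishes identically: contradiction with invertibility
      exfalso
      obtain ⟨hzz, hyz, hyy⟩ := coeffs2 hqL
      set u : Fin 3 → ℂ := (↑M⁻¹ : Matrix (Fin 3) (Fin 3) ℂ).mulVec ![1, 0, 1] with hu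
      have hw : A.mulVec u = ![1, 0, 1] := by
        rw [hu, Matrix.mulVec_mulVec, hA, coe_mul_coe_inv, Matrix.one_mulVec]
      have key : (A.mulVec u) 0 * (A.mulVec u) 2 - (A.mulVec u) 1 ^ 2 = 0 := by
        simp only [mulVec3]
        linear_combination u 0 ^ 2 * hq0 + u 0 * u 1 * hq1 + u 0 * u 2 * hq2
          - u 0 * u 2 * hyy + u 1 ^ 2 * hyy + u 1 * u 2 * hq3 + u 2 ^ 2 * hzz
      rw [hw] at key
      simp only [Matrix.cons_val_zero, Matrix.cons_val_one, Matrix.head_cons,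
        Matrix.cons_val_two, Matrix.tail_cons] at key
      norm_num at key
    obtain ⟨h02, h01, -⟩ := coeffs2 hpL
    -- now extract the shape
    simp only [h01, h02] at hq1 hq2 hq3 hq4
    have h12 : A 1 2 = 0 := by
      have hsq : A 1 2 ^ 2 = 0 := by linear_combination -hq4
      exact pow_eq_zero_iff (by norm_num) |>.mp hsq
    simp only [h12] at hq2 hq3
    have hdet := M.2
    rw [Matrix.det_fin_three] at hdet
    rw [← hA] at hdet
    simp only [h01, h02, h12] at hdet
    -- hdet : A 0 0 * A 1 1 * A 2 2 = 1 (after simp)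
    have hd : A 0 0 * A 1 1 * A 2 2 = 1 := by linear_combination hdet
    have hc3 : A 1 1 ^ 3 = 1 := by linear_combination hd - A 1 1 * hq2
    have hc : A 1 1 ≠ 0 := by
      intro hz
      rw [hz] at hc3
      norm_num at hc3
    have ha : A 0 0 ≠ 0 := by
      intro hz
      apply hc
      have hsq : A 1 1 ^ 2 = 0 := by linear_combination -hq2 + A 2 2 * hz
      exact pow_eq_zero_iff (by norm_num) |>.mp hsq
    refine ⟨A 0 0, A 1 1, A 1 0, ha, hc, hc3, ?_⟩
    have e20 : A 2 0 = A 1 0 ^ 2 / A 0 0 := by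
      field_simp
      linear_combination hq0
    have e21 : A 2 1 = 2 * A 1 0 * A 1 1 / A 0 0 := by
      field_simp
      linear_combination hq1
    have e22 : A 2 2 = 1 / (A 0 0 * A 1 1) := by
      field_simp
      linear_combination hd
    conv_lhs => rw [Matrix.eta_fin_three A]
    rw [h01, h02, h12, e20, e21, e22]
  · -- Converse direction
    rintro ⟨a, c, b, ha, hc, hc3, hM⟩
    have hkey : ∀ u : Fin 3 → ℂ,
        c * (((↑M : Matrix (Fin 3) (Fin 3) ℂ).mulVec u) 0 ^ 2 * ((↑M : Matrix (Fin 3) (Fin 3) ℂ).mulVec u) 2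
          - ((↑M : Matrix (Fin 3) (Fin 3) ℂ).mulVec u) 0 * ((↑M : Matrix (Fin 3) (Fin 3) ℂ).mulVec u) 1 ^ 2)
        = a * (u 0 ^ 2 * u 2 - u 0 * u 1 ^ 2) := by
      intro u
      simp only [mulVec3, hM]
      simp only [Matrix.cons_val_zero, Matrix.cons_val_one, Matrix.head_cons,
        Matrix.cons_val_two, Matrix.tail_cons, Matrix.of_apply, Matrix.cons_val',
        Matrix.empty_val', Matrix.cons_val_fin_one, Matrix.head_fin_const]
      field_simp
      ring_nf
      linear_combination (-(a ^ 2 * u 0 * u 1 ^ 2)) * hc3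
    apply Set.Subset.antisymm
    · rintro q ⟨p, hp, rfl⟩
      induction p using Projectivization.ind with
      | h v hv =>
        rw [act_mk]
        rw [mem_Ctan_mk] at hp ⊢
        apply mul_left_cancel₀ hc
        linear_combination hkey v + a * hp
    · intro p
      induction p using Projectivization.ind with
      | h v hv =>
        intro hp
        refine ⟨act M⁻¹ (Projectivization.mk ℂ v hv), ?_, act_cancel M _⟩
        rw [mem_Ctan_mk] at hp
        rw [act_mk, mem_Ctan_mk]
        set u : Fin 3 → ℂ := (↑M⁻¹ : Matrix (Fin 3) (Fin 3) ℂ).mulVec v with hu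
        have hw : (↑M : Matrix (Fin 3) (Fin 3) ℂ).mulVec u = v := by
          rw [hu, Matrix.mulVec_mulVec, coe_mul_coe_inv, Matrix.one_mulVec]
        have h2 := hkey u
        rw [hw] at h2
        have h3 : a * (u 0 ^ 2 * u 2 - u 0 * u 1 ^ 2) = 0 := by
          linear_combination -h2 + c * hp
        have h4 := (mul_eq_zero.mp h3).resolve_left ha
        linear_combination h4

end
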